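/- For all r ≥ 0 with r ≠ 1, the rescaled filter transfer function β̄(r) = (1/π)∫₀^{2π}(cos t − 1/4)cos(rt) dt satisfies |β̄(r)| < 1. -/

import Mathlib

open Real


lemma sin_cubic_bound {x : ℝ} (h0 : 0 ≤ x) (hx : x ≤ π) :
    3 * π ^ 2 * Real.sin x ≤ 3 * π ^ 2 * x - 2 * x ^ 3 := by
  have h1 : Real.sin x = ∫ t in (0:ℝ)..x, Real.cos t := by
    simp [integral_cos]
  have h2 : (∫ t in (0:ℝ)..x, Real.cos t) ≤ ∫ t in (0:ℝ)..x, (1 - 2 / π ^ 2 * t ^ 2) := by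
    apply intervalIntegral.integral_mono_on h0
    · exact (Real.continuous_cos).intervalIntegrable _ _
    · exact (Continuous.intervalIntegrable (by continuity) _ _)
    · intro t ht
      apply Real.cos_le_one_sub_mul_cos_sq
      rw [abs_le]
      constructor <;> [linarith [ht.1, Real.pi_pos.le]; linarith [ht.2]]
  have h3 : (∫ t in (0:ℝ)..x, (1 - 2 / π ^ 2 * t ^ 2)) = x - 2 / (3 * π ^ 2) * x ^ 3 := by
    rw [intervalIntegral.integral_sub intervalIntegrable_const
      (Continuous.intervalIntegrable (by continuity) _ _),
      intervalIntegral.integral_const_mul, integral_pow]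
    simp
    ring
  have hπ : (0:ℝ) < π ^ 2 := by positivity
  have h4 : Real.sin x ≤ x - 2 / (3 * π ^ 2) * x ^ 3 := by
    rw [h1, ← h3]; exact h2
  have h5 := mul_le_mul_of_nonneg_left h4 (by positivity : (0:ℝ) ≤ 3 * π ^ 2)
  calc 3 * π ^ 2 * Real.sin x ≤ 3 * π ^ 2 * (x - 2 / (3 * π ^ 2) * x ^ 3) := h5
    _ = 3 * π ^ 2 * x - 2 * x ^ 3 := by field_simp



lemma integral_val (r : ℝ) (hr : 0 < r) (hr1 : r ≠ 1) :
    (∫ t in (0:ℝ)..(2 * π), (Real.cos t - 1/4) * Real.cos (r * t))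
      = Real.sin (2 * π * r) * (3 * r ^ 2 + 1) / (4 * r * (r ^ 2 - 1)) := by
  have h1r : (1:ℝ) + r ≠ 0 := by linarith
  have h1r' : (1:ℝ) - r ≠ 0 := by
    intro h; exact hr1 (by linarith)
  have hr0 : r ≠ 0 := ne_of_gt hr
  set F : ℝ → ℝ := fun t => Real.sin ((1+r)*t) / (2*(1+r))
      + Real.sin ((1-r)*t) / (2*(1-r)) - Real.sin (r*t) / (4*r) with hF
  have hderiv : ∀ t ∈ Set.uIcc (0:ℝ) (2*π), HasDerivAt F ((Real.cos t - 1/4) * Real.cos (r*t)) t := by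
    intro t _
    have d1 : HasDerivAt (fun t : ℝ => Real.sin ((1+r)*t)) (Real.cos ((1+r)*t) * (1+r)) t :=
      (Real.hasDerivAt_sin ((1+r)*t)).comp t (by simpa using (hasDerivAt_id t).const_mul ((1+r):ℝ))
    have d2 : HasDerivAt (fun t : ℝ => Real.sin ((1-r)*t)) (Real.cos ((1-r)*t) * (1-r)) t :=
      (Real.hasDerivAt_sin ((1-r)*t)).comp t (by simpa using (hasDerivAt_id t).const_mul ((1-r):ℝ))
    have d3 : HasDerivAt (fun t : ℝ => Real.sin (r*t)) (Real.cos (r*t) * r) t :=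
      (Real.hasDerivAt_sin (r*t)).comp t (by simpa using (hasDerivAt_id t).const_mul (r:ℝ))
    have := ((d1.div_const (2*(1+r))).add (d2.div_const (2*(1-r)))).sub (d3.div_const (4*r))
    refine this.congr_deriv ?_
    have e1 : Real.cos ((1+r)*t) = Real.cos t * Real.cos (r*t) - Real.sin t * Real.sin (r*t) := by
      rw [show (1+r)*t = t + r*t by ring, Real.cos_add]
    have e2 : Real.cos ((1-r)*t) = Real.cos t * Real.cos (r*t) + Real.sin t * Real.sin (r*t) := by
      rw [show (1-r)*t = t - r*t by ring, Real.cos_sub]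
    rw [e1, e2]
    field_simp
    ring
  have hint : IntervalIntegrable (fun t => (Real.cos t - 1/4) * Real.cos (r*t)) MeasureTheory.volume 0 (2*π) :=
    (Continuous.intervalIntegrable (by continuity) _ _)
  rw [intervalIntegral.integral_eq_sub_of_hasDerivAt hderiv hint]
  have s1 : Real.sin ((1+r)*(2*π)) = Real.sin (2*π*r) := by
    rw [show (1+r)*(2*π) = 2*π*r + 2*π by ring, Real.sin_add_two_pi]
  have s2 : Real.sin ((1-r)*(2*π)) = -Real.sin (2*π*r) := by
    rw [show (1-r)*(2*π) = 2*π - 2*π*r by ring, Real.sin_two_pi_sub]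
  have s3 : r * (2*π) = 2*π*r := by ring
  simp only [hF, s3, s1, s2, mul_zero, Real.sin_zero, zero_div]
  have hd : r^2 - 1 ≠ 0 := by
    intro h
    have : (r-1)*(r+1) = 0 := by ring_nf; linarith [h]
    rcases mul_eq_zero.1 this with h' | h'
    · exact hr1 (by linarith)
    · linarith
  field_simp
  ring


lemma key_ineq (r : ℝ) (hr : 0 < r) (hr1 : r ≠ 1) :
    |Real.sin (2 * π * r)| * (3 * r ^ 2 + 1) < 4 * π * r * |r ^ 2 - 1| := by
  have hπ := Real.pi_pos
  have hπ3 : π > 3 := by linarith [Real.pi_gt_three]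
  rcases le_or_gt r (2/5) with h1 | h1
  · have hx : (0:ℝ) < 2*π*r := by positivity
    have hs : |Real.sin (2*π*r)| < |2*π*r| := Real.abs_sin_lt_abs (ne_of_gt hx)
    rw [abs_of_pos hx] at hs
    have habs : |r^2 - 1| = 1 - r^2 := by
      rw [abs_of_neg (by nlinarith)]; ring
    rw [habs]
    have h2 : 2*π*r * (3*r^2+1) ≤ 4*π*r*(1-r^2) := by
      nlinarith [mul_nonneg (mul_nonneg hπ.le hr.le) (by nlinarith : (0:ℝ) ≤ 1 - 5*r^2)]
    have h5 := mul_lt_mul_of_pos_right hs (show (0:ℝ) < 3*r^2+1 by positivity)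
    linarith
  rcases lt_or_ge r (1/2) with h2 | h2
  · have hx0 : (0:ℝ) ≤ 2*π*r := by positivity
    have hxπ : 2*π*r ≤ π := by nlinarith
    have hnn : 0 ≤ Real.sin (2*π*r) := Real.sin_nonneg_of_nonneg_of_le_pi hx0 hxπ
    rw [abs_of_nonneg hnn]
    have hs : Real.sin (2*π*r) ≤ π - 2*π*r := by
      have he : Real.sin (2*π*r) = Real.sin (π - (π - 2*π*r)) := by ring_nf
      rw [he, Real.sin_pi_sub]
      exact Real.sin_le (by linarith)
    have habs : |r^2 - 1| = 1 - r^2 := by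
      rw [abs_of_neg (by nlinarith)]; ring
    rw [habs]
    have hpoly : (π - 2*π*r) * (3*r^2+1) < 4*π*r*(1-r^2) := by
      have hfac : 4*π*r*(1-r^2) - (π - 2*π*r) * (3*r^2+1) = π * (2*r^3 - 3*r^2 + 6*r - 1) := by ring
      nlinarith [mul_pos hπ (show (0:ℝ) < 2*r^3 - 3*r^2 + 6*r - 1 by nlinarith [sq_nonneg r, sq_nonneg (r - 2/5)])]
    have h5 := mul_le_mul_of_nonneg_right hs (show (0:ℝ) ≤ 3*r^2+1 by positivity)
    linarith
  rcases lt_or_ge r 1 with h3 | h3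
  · set x := 2*π*(1-r) with hxdef
    have h1r : (0:ℝ) < 1 - r := by linarith
    have hx0 : 0 < x := by rw [hxdef]; positivity
    have hxπ : x ≤ π := by rw [hxdef]; nlinarith
    have hsx : Real.sin (2*π*r) = -Real.sin x := by
      rw [show 2*π*r = 2*π - x by rw [hxdef]; ring]
      exact Real.sin_two_pi_sub x
    have hnn : 0 ≤ Real.sin x := Real.sin_nonneg_of_nonneg_of_le_pi hx0.le hxπ
    rw [hsx, abs_neg, abs_of_nonneg hnn]
    have hcb := sin_cubic_bound hx0.le hxπ
    have habs : |r^2 - 1| = 1 - r^2 := by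
      rw [abs_of_neg (by nlinarith)]; ring
    rw [habs]
    have hπ2 : (0:ℝ) < 3*π^2 := by positivity
    rw [← mul_lt_mul_iff_right₀ hπ2]
    have hstep : (3*π^2*(2*π*(1-r)) - 2*(2*π*(1-r))^3) * (3*r^2+1) < 3*π^2 * (4*π*r*(1-r^2)) := by
      have hfac : 3*π^2 * (4*π*r*(1-r^2)) - (3*π^2*(2*π*(1-r)) - 2*(2*π*(1-r))^3) * (3*r^2+1)
          = 2*π^3*(1-r)^3*(24*r^2+5) := by ring
      nlinarith [mul_pos (mul_pos (pow_pos hπ 3) (pow_pos h1r 3)) (show (0:ℝ) < 24*r^2+5 by positivity)]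
    calc 3*π^2 * (Real.sin x * (3*r^2+1)) = (3*π^2*Real.sin x) * (3*r^2+1) := by ring
      _ ≤ (3*π^2*(2*π*(1-r)) - 2*(2*π*(1-r))^3) * (3*r^2+1) := by
          have := mul_le_mul_of_nonneg_right hcb (show (0:ℝ) ≤ 3*r^2+1 by positivity)
          rw [hxdef]; rw [hxdef] at this; linarith
      _ < 3*π^2 * (4*π*r*(1-r^2)) := hstep
  rcases le_or_gt r (5/4) with h4 | h4
  · have h3' : 1 < r := lt_of_le_of_ne h3 (Ne.symm hr1)
    set x := 2*π*(r-1) with hxdef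
    have h1r : (0:ℝ) < r - 1 := by linarith
    have hx0 : 0 < x := by rw [hxdef]; positivity
    have hxπ : x ≤ π := by rw [hxdef]; nlinarith
    have hsx : Real.sin (2*π*r) = Real.sin x := by
      rw [show 2*π*r = x + 2*π by rw [hxdef]; ring]
      exact Real.sin_add_two_pi x
    have hnn : 0 ≤ Real.sin x := Real.sin_nonneg_of_nonneg_of_le_pi hx0.le hxπ
    rw [hsx, abs_of_nonneg hnn]
    have hcb := sin_cubic_bound hx0.le hxπ
    have habs : |r^2 - 1| = r^2 - 1 := by rw [abs_of_pos (by nlinarith)]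
    rw [habs]
    have hπ2 : (0:ℝ) < 3*π^2 := by positivity
    rw [← mul_lt_mul_iff_right₀ hπ2]
    have hstep : (3*π^2*(2*π*(r-1)) - 2*(2*π*(r-1))^3) * (3*r^2+1) < 3*π^2 * (4*π*r*(r^2-1)) := by
      have hfac : 3*π^2 * (4*π*r*(r^2-1)) - (3*π^2*(2*π*(r-1)) - 2*(2*π*(r-1))^3) * (3*r^2+1)
          = 2*π^3*(r-1)^3*(24*r^2+5) := by ring
      nlinarith [mul_pos (mul_pos (pow_pos hπ 3) (pow_pos h1r 3)) (show (0:ℝ) < 24*r^2+5 by positivity)]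
    calc 3*π^2 * (Real.sin x * (3*r^2+1)) = (3*π^2*Real.sin x) * (3*r^2+1) := by ring
      _ ≤ (3*π^2*(2*π*(r-1)) - 2*(2*π*(r-1))^3) * (3*r^2+1) := by
          have := mul_le_mul_of_nonneg_right hcb (show (0:ℝ) ≤ 3*r^2+1 by positivity)
          rw [hxdef]; rw [hxdef] at this; linarith
      _ < 3*π^2 * (4*π*r*(r^2-1)) := hstep
  · have habs : |r^2 - 1| = r^2 - 1 := by rw [abs_of_pos (by nlinarith)]
    rw [habs]
    have hs : |Real.sin (2*π*r)| ≤ 1 := Real.abs_sin_le_one _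
    have hu : (0:ℝ) ≤ r - 5/4 := by linarith
    have hcube : (0:ℝ) < 3 * (4*r*(r^2-1)) - (3*r^2+1) := by
      nlinarith [mul_nonneg (mul_nonneg hu hu) hu, mul_nonneg hu hu]
    have hkey : 3*r^2 + 1 < 4*π*r*(r^2-1) := by
      nlinarith [mul_nonneg (by linarith : (0:ℝ) ≤ π - 3) (by nlinarith : (0:ℝ) ≤ 4*r*(r^2-1))]
    have h5 := mul_le_mul_of_nonneg_right hs (show (0:ℝ) ≤ 3*r^2+1 by positivity)
    nlinarith


theorem rescaled_filter_abs_lt_one (r : ℝ) (hr : 0 ≤ r) (hr1 : r ≠ 1) :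
    |(1 / π) * ∫ t in (0:ℝ)..(2 * π), (Real.cos t - 1/4) * Real.cos (r * t)| < 1 := by
  have hπ := Real.pi_pos
  rcases eq_or_lt_of_le hr with h0 | h0
  · -- r = 0
    have hval : (∫ t in (0:ℝ)..(2 * π), (Real.cos t - 1/4) * Real.cos (r * t)) = -(π/2) := by
      rw [← h0]
      simp only [zero_mul, Real.cos_zero, mul_one]
      rw [intervalIntegral.integral_sub (Real.continuous_cos.intervalIntegrable _ _)
        intervalIntegrable_const, integral_cos]
      simp [Real.sin_two_pi]
      ring
    rw [hval, abs_mul, abs_of_pos (by positivity : (0:ℝ) < 1/π), abs_of_nonpos (by linarith : -(π/2) ≤ 0)]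
    rw [show (1/π) * -(-(π/2)) = 1/2 by field_simp]
    norm_num
  · -- r > 0
    have hval := integral_val r h0 hr1
    rw [hval]
    have hd : r^2 - 1 ≠ 0 := by
      intro h
      have h2 : (r-1)*(r+1) = 0 := by ring_nf; linarith
      rcases mul_eq_zero.1 h2 with h' | h'
      · exact hr1 (by linarith)
      · linarith
    have habsd : (0:ℝ) < |r^2 - 1| := abs_pos.2 hd
    have key := key_ineq r h0 hr1
    have heq : |(1/π) * (Real.sin (2*π*r) * (3*r^2+1) / (4*r*(r^2-1)))|
        = |Real.sin (2*π*r)| * (3*r^2+1) / (π * (4*r*|r^2-1|)) := by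
      rw [abs_mul, abs_div, abs_div, abs_mul, abs_mul, abs_mul, abs_one,
        abs_of_pos hπ, abs_of_nonneg (show (0:ℝ) ≤ 3*r^2+1 by positivity),
        abs_of_pos (show (0:ℝ) < 4 by norm_num), abs_of_pos h0]
      field_simp
    rw [heq, div_lt_one (by positivity)]
    nlinarith [mul_pos (mul_pos hπ h0) habsd]
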